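/- Let η > 0, let V₁ ∈ C²(ℝ) and V₂ ∈ C¹(ℝ) satisfy either (V₁' ≤ 0 and V₂' ≥ 0) or (V₁' ≥ 0 and V₂' ≤ 0), and additionally V₁'' ≥ 0. Let q be a nonnegative, twice continuously differentiable solution of ∂_t q(t,x) + ∂_x( V₁(W(t,x)) q(t,x) ) = 0 with W(t,x) := (1/η) ∫_x^{x+η} V₂(q(t,y)) dy. Fix a time t and a point x̃ such that ∂_x q(t,x) ≤ 0 for all x ∈ ℝ, ∂_x q(t,x̃) = 0, and ∂_x² q(t,x̃) = 0. Then ∂_t ∂_x q(t,x̃) ≤ 0; i.e. the dynamics preserve monotonically decreasing profiles. -/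

import Mathlib

open MeasureTheory Set

/-- The moving-average nonlocal term `W(t,x) = (1/η) ∫_x^{x+η} V₂(q(t,y)) dy`. -/
noncomputable def movingAvgW (η : ℝ) (V₂ : ℝ → ℝ) (q : ℝ × ℝ → ℝ) (t x : ℝ) : ℝ :=
  (1 / η) * ∫ y in x..(x + η), V₂ (q (t, y))

/-- Clairaut-type swap of the two partial derivatives for a `C²` function on `ℝ × ℝ`. -/
lemma swap_partial_deriv {f : ℝ × ℝ → ℝ} (hf : ContDiff ℝ 2 f) (a b : ℝ) :
    deriv (fun s => deriv (fun y => f (s, y)) b) a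
      = deriv (fun x => deriv (fun s => f (s, x)) a) b := by
  have hfd : Differentiable ℝ f := hf.differentiable (by norm_num)
  have hD : ContDiff ℝ 1 (fderiv ℝ f) := hf.fderiv_right (m := 1) (by norm_num)
  have key1 : ∀ (s x : ℝ), HasDerivAt (fun y => f (s, y))
      (fderiv ℝ f (s, x) (0, 1)) x := by
    intro s x
    have h1 : HasDerivAt (fun y : ℝ => ((s, y) : ℝ × ℝ)) ((0 : ℝ), (1 : ℝ)) x :=
      (hasDerivAt_const x s).prodMk (hasDerivAt_id x)
    exact (hfd (s, x)).hasFDerivAt.comp_hasDerivAt x h1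
  have key2 : ∀ (s x : ℝ), HasDerivAt (fun s' => f (s', x))
      (fderiv ℝ f (s, x) (1, 0)) s := by
    intro s x
    have h1 : HasDerivAt (fun s' : ℝ => ((s', x) : ℝ × ℝ)) ((1 : ℝ), (0 : ℝ)) s :=
      (hasDerivAt_id s).prodMk (hasDerivAt_const s x)
    exact (hfd (s, x)).hasFDerivAt.comp_hasDerivAt s h1
  have e1 : (fun s => deriv (fun y => f (s, y)) b) = fun s => fderiv ℝ f (s, b) (0, 1) :=
    funext fun s => (key1 s b).deriv
  have e2 : (fun x => deriv (fun s => f (s, x)) a) = fun x => fderiv ℝ f (a, x) (1, 0) :=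
    funext fun x => (key2 a x).deriv
  have hD2 : HasFDerivAt (fderiv ℝ f) (fderiv ℝ (fderiv ℝ f) (a, b)) (a, b) :=
    (hD.differentiable (by norm_num) (a, b)).hasFDerivAt
  have hL : ∀ v : ℝ × ℝ, HasFDerivAt (fun p => fderiv ℝ f p v)
      ((ContinuousLinearMap.apply ℝ ℝ v).comp (fderiv ℝ (fderiv ℝ f) (a, b))) (a, b) :=
    fun v => (ContinuousLinearMap.apply ℝ ℝ v).hasFDerivAt.comp _ hD2
  have d1 : HasDerivAt (fun s => fderiv ℝ f (s, b) (0, 1))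
      (fderiv ℝ (fderiv ℝ f) (a, b) (1, 0) (0, 1)) a := by
    have h1 : HasDerivAt (fun s : ℝ => ((s, b) : ℝ × ℝ)) ((1 : ℝ), (0 : ℝ)) a :=
      (hasDerivAt_id a).prodMk (hasDerivAt_const a b)
    simpa [Function.comp_def] using (hL (0, 1)).comp_hasDerivAt a h1
  have d2 : HasDerivAt (fun x => fderiv ℝ f (a, x) (1, 0))
      (fderiv ℝ (fderiv ℝ f) (a, b) (0, 1) (1, 0)) b := by
    have h1 : HasDerivAt (fun x : ℝ => ((a, x) : ℝ × ℝ)) ((0 : ℝ), (1 : ℝ)) b :=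
      (hasDerivAt_const b a).prodMk (hasDerivAt_id b)
    simpa [Function.comp_def] using (hL (1, 0)).comp_hasDerivAt b h1
  have hsymm := ((hf.contDiffAt (x := ((a, b) : ℝ × ℝ))).isSymmSndFDerivAt
    (by simp [minSmoothness_of_isRCLikeNormedField])).eq ((1 : ℝ), (0 : ℝ)) ((0 : ℝ), (1 : ℝ))
  rw [e1, e2, d1.deriv, d2.deriv, hsymm]

/-- **Preservation of monotonically decreasing profiles.**
Let `V₁ ∈ C²`, `V₂ ∈ C¹` satisfy either (`V₁' ≤ 0` and `V₂' ≥ 0`) or (`V₁' ≥ 0` and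
`V₂' ≤ 0`) together with `V₁'' ≥ 0`, and let `q ≥ 0` be a `C²` solution of
`∂ₜ q + ∂ₓ(V₁(W) q) = 0` with `W(t,x) = (1/η) ∫_x^{x+η} V₂(q(t,y)) dy`. If at time `t` the
profile satisfies `∂ₓ q(t,·) ≤ 0` everywhere and `∂ₓ q(t,x₀) = 0`, `∂ₓ² q(t,x₀) = 0`, then
`∂ₜ ∂ₓ q(t,x₀) ≤ 0`. -/
theorem monotone_decreasing_preserved
    (η : ℝ) (hη : 0 < η) (q : ℝ × ℝ → ℝ) (V₁ V₂ : ℝ → ℝ)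
    (hV₁ : ContDiff ℝ 2 V₁) (hV₂ : ContDiff ℝ 1 V₂)
    (hsign : ((∀ x, deriv V₁ x ≤ 0) ∧ (∀ x, 0 ≤ deriv V₂ x)) ∨
             ((∀ x, 0 ≤ deriv V₁ x) ∧ (∀ x, deriv V₂ x ≤ 0)))
    (hV₁'' : ∀ x, 0 ≤ deriv (deriv V₁) x)
    (hq_smooth : ContDiff ℝ 2 q)
    (hq_nonneg : ∀ t x : ℝ, 0 ≤ q (t, x))
    (hPDE : ∀ t x : ℝ,
      deriv (fun s => q (s, x)) t
        + deriv (fun y => V₁ (movingAvgW η V₂ q t y) * q (t, y)) x = 0)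
    (t x₀ : ℝ)
    (hdec : ∀ x : ℝ, deriv (fun y => q (t, y)) x ≤ 0)
    (hcrit : deriv (fun y => q (t, y)) x₀ = 0)
    (hcrit2 : deriv (deriv (fun y => q (t, y))) x₀ = 0) :
    deriv (fun s => deriv (fun y => q (s, y)) x₀) t ≤ 0 := by
  -- basic regularity facts
  have hu : ContDiff ℝ 2 (fun y => q (t, y)) :=
    hq_smooth.comp (contDiff_const.prodMk contDiff_id)
  have hud : Differentiable ℝ (fun y => q (t, y)) := hu.differentiable (by norm_num)
  have hu1 : ContDiff ℝ 1 (deriv fun y => q (t, y)) := by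
    have h := (contDiff_succ_iff_deriv (n := 1)).mp (by exact_mod_cast hu)
    exact h.2.2
  have hV₁d : Differentiable ℝ V₁ := hV₁.differentiable (by norm_num)
  have hV₁' : ContDiff ℝ 1 (deriv V₁) := by
    have h := (contDiff_succ_iff_deriv (n := 1)).mp (by exact_mod_cast hV₁)
    exact h.2.2
  have hf1 : ContDiff ℝ 1 (fun y => V₂ (q (t, y))) := hV₂.comp (hu.of_le one_le_two)
  have hfc : Continuous (fun y => V₂ (q (t, y))) := hf1.continuous
  have hfd : Differentiable ℝ (fun y => V₂ (q (t, y))) := hf1.differentiable (by norm_num)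
  -- derivative of the integrand
  have hderiv_f : ∀ y : ℝ, HasDerivAt (fun y => V₂ (q (t, y)))
      (deriv V₂ (q (t, y)) * deriv (fun y => q (t, y)) y) y := by
    intro y
    have h2 : HasDerivAt V₂ (deriv V₂ (q (t, y))) (q (t, y)) :=
      (hV₂.differentiable (by norm_num) _).hasDerivAt
    simpa [Function.comp_def] using h2.comp y (hud y).hasDerivAt
  -- FTC: derivative of the moving average
  have hG : ∀ x : ℝ, HasDerivAt (fun x => ∫ y in (0:ℝ)..x, V₂ (q (t, y)))
      (V₂ (q (t, x))) x := fun x => (hfc.integral_hasStrictDerivAt 0 x).hasDerivAt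
  have hwrep : ∀ x : ℝ, movingAvgW η V₂ q t x
      = (1/η) * ((∫ y in (0:ℝ)..(x+η), V₂ (q (t, y))) - ∫ y in (0:ℝ)..x, V₂ (q (t, y))) := by
    intro x
    have h := intervalIntegral.integral_add_adjacent_intervals
      (hfc.intervalIntegrable (μ := volume) 0 x) (hfc.intervalIntegrable (μ := volume) x (x + η))
    unfold movingAvgW
    congr 1
    linarith [h]
  have hw_deriv : ∀ x : ℝ, HasDerivAt (fun x => movingAvgW η V₂ q t x)
      ((1/η) * (V₂ (q (t, x+η)) - V₂ (q (t, x)))) x := by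
    intro x
    have h1 : HasDerivAt (fun x : ℝ => ∫ y in (0:ℝ)..(x+η), V₂ (q (t, y)))
        (V₂ (q (t, x+η))) x := by
      simpa [Function.comp_def] using (hG (x+η)).comp x ((hasDerivAt_id x).add_const η)
    have h2 := (h1.sub (hG x)).const_mul (1/η)
    exact h2.congr_of_eventuallyEq (Filter.Eventually.of_forall fun y => hwrep y)
  -- derivative of the flux F x = V₁(W x) * q(t,x)
  have hVc : ∀ x : ℝ, HasDerivAt (fun x => V₁ (movingAvgW η V₂ q t x))
      (deriv V₁ (movingAvgW η V₂ q t x) * ((1/η) * (V₂ (q (t, x+η)) - V₂ (q (t, x))))) x := by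
    intro x
    have h2 : HasDerivAt V₁ (deriv V₁ (movingAvgW η V₂ q t x)) (movingAvgW η V₂ q t x) :=
      (hV₁d _).hasDerivAt
    simpa [Function.comp_def] using h2.comp x (hw_deriv x)
  have hA : ∀ x : ℝ, HasDerivAt (fun y => V₁ (movingAvgW η V₂ q t y) * q (t, y))
      (deriv V₁ (movingAvgW η V₂ q t x) * ((1/η) * (V₂ (q (t, x+η)) - V₂ (q (t, x)))) * q (t, x)
        + V₁ (movingAvgW η V₂ q t x) * deriv (fun y => q (t, y)) x) x := by
    intro x
    exact (hVc x).mul (hud x).hasDerivAt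
  -- from the PDE: the time derivative is minus the flux derivative
  have hEq : (fun x => deriv (fun s => q (s, x)) t)
      = fun x => -(deriv V₁ (movingAvgW η V₂ q t x)
            * ((1/η) * (V₂ (q (t, x+η)) - V₂ (q (t, x)))) * q (t, x)
          + V₁ (movingAvgW η V₂ q t x) * deriv (fun y => q (t, y)) x) := by
    funext x
    have h1 := hPDE t x
    have h2 := (hA x).deriv
    rw [h2] at h1
    linarith
  -- second derivative of the flux at x₀
  have hB1 : HasDerivAt (fun x => deriv V₁ (movingAvgW η V₂ q t x))
      (deriv (deriv V₁) (movingAvgW η V₂ q t x₀)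
        * ((1/η) * (V₂ (q (t, x₀+η)) - V₂ (q (t, x₀))))) x₀ := by
    have h2 : HasDerivAt (deriv V₁) (deriv (deriv V₁) (movingAvgW η V₂ q t x₀))
        (movingAvgW η V₂ q t x₀) := (hV₁'.differentiable (by norm_num) _).hasDerivAt
    simpa [Function.comp_def] using h2.comp x₀ (hw_deriv x₀)
  have hB2 : HasDerivAt (fun x => (1/η) * (V₂ (q (t, x+η)) - V₂ (q (t, x))))
      ((1/η) * (deriv V₂ (q (t, x₀+η)) * deriv (fun y => q (t, y)) (x₀+η)
        - deriv V₂ (q (t, x₀)) * deriv (fun y => q (t, y)) x₀)) x₀ := by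
    have h1 : HasDerivAt (fun x : ℝ => V₂ (q (t, x+η)))
        (deriv V₂ (q (t, x₀+η)) * deriv (fun y => q (t, y)) (x₀+η)) x₀ := by
      simpa [Function.comp_def] using (hderiv_f (x₀+η)).comp x₀ ((hasDerivAt_id x₀).add_const η)
    exact (h1.sub (hderiv_f x₀)).const_mul (1/η)
  have hu'd : HasDerivAt (deriv fun y => q (t, y))
      (deriv (deriv fun y => q (t, y)) x₀) x₀ := (hu1.differentiable (by norm_num) _).hasDerivAt
  have hD : HasDerivAt (fun x => deriv V₁ (movingAvgW η V₂ q t x)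
        * ((1/η) * (V₂ (q (t, x+η)) - V₂ (q (t, x)))) * q (t, x)
      + V₁ (movingAvgW η V₂ q t x) * deriv (fun y => q (t, y)) x)
      ((deriv (deriv V₁) (movingAvgW η V₂ q t x₀)
          * ((1/η) * (V₂ (q (t, x₀+η)) - V₂ (q (t, x₀))))
          * ((1/η) * (V₂ (q (t, x₀+η)) - V₂ (q (t, x₀))))
        + deriv V₁ (movingAvgW η V₂ q t x₀)
          * ((1/η) * (deriv V₂ (q (t, x₀+η)) * deriv (fun y => q (t, y)) (x₀+η)
            - deriv V₂ (q (t, x₀)) * deriv (fun y => q (t, y)) x₀))) * q (t, x₀)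
        + deriv V₁ (movingAvgW η V₂ q t x₀)
          * ((1/η) * (V₂ (q (t, x₀+η)) - V₂ (q (t, x₀)))) * deriv (fun y => q (t, y)) x₀
        + (deriv V₁ (movingAvgW η V₂ q t x₀)
            * ((1/η) * (V₂ (q (t, x₀+η)) - V₂ (q (t, x₀)))) * deriv (fun y => q (t, y)) x₀
          + V₁ (movingAvgW η V₂ q t x₀) * deriv (deriv fun y => q (t, y)) x₀)) x₀ := by
    exact (((hB1.mul hB2).mul (hud x₀).hasDerivAt).add ((hVc x₀).mul hu'd))
  -- put everything together
  rw [swap_partial_deriv hq_smooth t x₀, hEq, hD.fun_neg.deriv]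
  rw [hcrit, hcrit2, neg_nonpos]
  simp only [mul_zero, sub_zero, add_zero, zero_mul]
  have hη' : (0:ℝ) < 1/η := by positivity
  have hup' : deriv (fun y => q (t, y)) (x₀+η) ≤ 0 := hdec _
  have hQ : 0 ≤ q (t, x₀) := hq_nonneg t x₀
  have hterm1 : 0 ≤ deriv (deriv V₁) (movingAvgW η V₂ q t x₀)
      * ((1/η) * (V₂ (q (t, x₀+η)) - V₂ (q (t, x₀))))
      * ((1/η) * (V₂ (q (t, x₀+η)) - V₂ (q (t, x₀)))) := by
    rw [mul_assoc]
    exact mul_nonneg (hV₁'' _) (mul_self_nonneg _)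
  have hterm2 : 0 ≤ deriv V₁ (movingAvgW η V₂ q t x₀)
      * ((1/η) * (deriv V₂ (q (t, x₀+η)) * deriv (fun y => q (t, y)) (x₀+η))) := by
    rcases hsign with ⟨h1, h2⟩ | ⟨h1, h2⟩
    · nlinarith [mul_nonneg (mul_nonneg (neg_nonneg.mpr (h1 (movingAvgW η V₂ q t x₀))) hη'.le)
        (mul_nonneg (h2 (q (t, x₀+η))) (neg_nonneg.mpr hup'))]
    · nlinarith [mul_nonneg (mul_nonneg (h1 (movingAvgW η V₂ q t x₀)) hη'.le)
        (mul_nonneg (neg_nonneg.mpr (h2 (q (t, x₀+η)))) (neg_nonneg.mpr hup'))]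
  nlinarith [mul_nonneg (add_nonneg hterm1 hterm2) hQ]
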